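/- arXiv:2405.21047 — 2 statements merged into one kernel-verified Lean document; each statement's English description precedes it below -/
import Mathlib

section
/- With notation as above, for any prefix w_{1:i}, the gap between the ASAp approximation and the true expected future grammaticality equals the mass of unexplored extensions weighted by their non-membership: c̃_S(w_{1:i}) − c(w_{1:i}) = Σ_{w_{1:j} ∈ X_S(w_{1:i})} P(w_{i+1:j} | w_{1:i}) · (1 − c(w_{1:j})), where X_S(w_{1:i}) is the set of shortest extensions of w_{1:i} lying in L_prefix that are not prefixes of any string in S. -/
open scoped BigOperators
open Finset Filter

namespace GAD

/-- Marginal probability of the prefix `u` under a distribution `P` on length-`n` strings. -/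
noncomputable def marg {α : Type*} [Fintype α] (n : ℕ) (P : List α → ℝ) (u : List α) : ℝ :=
  ∑ v : Fin (n - u.length) → α, P (u ++ List.ofFn v)

/-- Marginal probability mass of completions of `u` that land in the language `L`. -/
noncomputable def margL {α : Type*} [Fintype α] (n : ℕ) (P : List α → ℝ) (L : Set (List α))
    (u : List α) : ℝ :=
  ∑ v : Fin (n - u.length) → α, L.indicator P (u ++ List.ofFn v)

/-- Next-token conditional `P(a | u)`. -/
noncomputable def cond {α : Type*} [Fintype α] (n : ℕ) (P : List α → ℝ) (u : List α) (a : α) : ℝ :=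
  marg n P (u ++ [a]) / marg n P u

/-- Expected future grammaticality `c(u) = Σ_v P(v | u) · 1[u ++ v ∈ L]`. -/
noncomputable def efg {α : Type*} [Fintype α] (n : ℕ) (P : List α → ℝ) (L : Set (List α))
    (u : List α) : ℝ :=
  margL n P L u / marg n P u

/-- `u` is a prefix of some string of the language `L`. -/
def inPrefix {α : Type*} (L : Set (List α)) (u : List α) : Prop := ∃ v, u ++ v ∈ L

/-- Total probability mass of the language: `P(L)`. -/
noncomputable def PL {α : Type*} [Fintype α] (n : ℕ) (P : List α → ℝ) (L : Set (List α)) : ℝ :=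
  margL n P L []

open Classical in
/-- ASAp approximation of expected future grammaticality, with fuel = remaining length. -/
noncomputable def ctildeAux {α : Type*} [Fintype α] (n : ℕ) (P : List α → ℝ) (L : Set (List α))
    (S : Finset (List α)) : ℕ → List α → ℝ
  | 0, u => Set.indicator L (fun _ => (1 : ℝ)) u
  | (k + 1), u =>
      if ∃ s ∈ S, u <+: s then
        ∑ a : α, cond n P u a * ctildeAux n P L S k (u ++ [a])
      else Set.indicator {t | inPrefix L t} (fun _ => (1 : ℝ)) u

/-- ASAp overapproximation `c̃_S`. -/
noncomputable def ctilde {α : Type*} [Fintype α] (n : ℕ) (P : List α → ℝ) (L : Set (List α))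
    (S : Finset (List α)) (u : List α) : ℝ :=
  ctildeAux n P L S (n - u.length) u

/-- The antichain of shortest extensions of `u` lying in `L_prefix` that are not prefixes of
any previously sampled string in `S` (every proper extension-prefix between `u` and `t`
is a prefix of some sample). -/
def XS {α : Type*} (L : Set (List α)) (S : Finset (List α)) (u : List α) : Set (List α) :=
  {t | u <+: t ∧ inPrefix L t ∧ (¬ ∃ s ∈ S, t <+: s) ∧
       ∀ t', u <+: t' → t' <+: t → t' ≠ t → ∃ s ∈ S, t' <+: s}


section Aux

variable {α : Type*} [Fintype α]

lemma sum_ofFn_succ (f : List α → ℝ) (m : ℕ) (u : List α) :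
    ∑ v : Fin (m + 1) → α, f (u ++ List.ofFn v)
      = ∑ a : α, ∑ v : Fin m → α, f (u ++ [a] ++ List.ofFn v) := by
  rw [← Fintype.sum_prod_type (f := fun p : α × (Fin m → α) => f (u ++ [p.1] ++ List.ofFn p.2))]
  refine (Fintype.sum_equiv (Fin.consEquiv fun _ => α) _ _ fun p => ?_).symm
  simp [List.ofFn_succ, Fin.consEquiv]

lemma marg_succ (n : ℕ) (P : List α → ℝ) (u : List α)
    (h : u.length < n) : marg n P u = ∑ a : α, marg n P (u ++ [a]) := by
  have h1 : n - u.length = (n - (u.length + 1)) + 1 := by omega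
  unfold marg
  rw [h1, sum_ofFn_succ]
  refine Finset.sum_congr rfl fun a _ => ?_
  have : n - (u ++ [a]).length = n - (u.length + 1) := by simp
  rw [this]

lemma margL_succ (n : ℕ) (P : List α → ℝ) (L : Set (List α)) (u : List α)
    (h : u.length < n) : margL n P L u = ∑ a : α, margL n P L (u ++ [a]) := by
  have h1 : n - u.length = (n - (u.length + 1)) + 1 := by omega
  unfold margL
  rw [h1, sum_ofFn_succ]
  refine Finset.sum_congr rfl fun a _ => ?_
  have : n - (u ++ [a]).length = n - (u.length + 1) := by simp
  rw [this]

lemma marg_of_length_eq (n : ℕ) (P : List α → ℝ) (u : List α)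
    (h : u.length = n) : marg n P u = P u := by
  unfold marg
  rw [show n - u.length = 0 by omega]
  simp

lemma margL_of_length_eq (n : ℕ) (P : List α → ℝ) (L : Set (List α)) (u : List α)
    (h : u.length = n) : margL n P L u = L.indicator P u := by
  unfold margL
  rw [show n - u.length = 0 by omega]
  simp

lemma efg_of_length_eq (n : ℕ) (P : List α → ℝ) (L : Set (List α)) (u : List α)
    (h : u.length = n) (hpos : 0 < marg n P u) :
    efg n P L u = Set.indicator L (fun _ => (1 : ℝ)) u := by
  have hm := marg_of_length_eq n P u h
  have hne : P u ≠ 0 := by rw [hm] at hpos; exact hpos.ne'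
  unfold efg
  rw [margL_of_length_eq n P L u h, hm]
  by_cases hu : u ∈ L
  · simp [Set.indicator_of_mem hu, div_self hne]
  · simp [Set.indicator_of_notMem hu]

lemma efg_of_not_inPrefix (n : ℕ) (P : List α → ℝ) (L : Set (List α)) (u : List α)
    (h : ¬ inPrefix L u) : efg n P L u = 0 := by
  have hz : margL n P L u = 0 :=
    Finset.sum_eq_zero fun v _ =>
      Set.indicator_of_notMem (fun hmem => h ⟨List.ofFn v, hmem⟩) _
  simp [efg, hz]

lemma efg_succ (n : ℕ) (P : List α → ℝ) (L : Set (List α)) (u : List α)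
    (h : u.length < n) (hmarg : ∀ v : List α, v.length ≤ n → 0 < marg n P v) :
    efg n P L u = ∑ a : α, cond n P u a * efg n P L (u ++ [a]) := by
  unfold efg cond
  rw [margL_succ n P L u h, Finset.sum_div]
  refine Finset.sum_congr rfl fun a _ => ?_
  have h2 : marg n P (u ++ [a]) ≠ 0 :=
    (hmarg _ (by simp; omega)).ne'
  have h1 : marg n P u ≠ 0 := (hmarg u h.le).ne'
  field_simp

lemma XS_length_le {n : ℕ} {L : Set (List α)} (hL : ∀ w ∈ L, w.length = n)
    {S : Finset (List α)} {u t : List α} (ht : t ∈ XS L S u) : t.length ≤ n := by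
  obtain ⟨-, ⟨v, hv⟩, -, -⟩ := ht
  have := hL _ hv
  simp only [List.length_append] at this
  omega

lemma XS_finite {n : ℕ} {L : Set (List α)} (hL : ∀ w ∈ L, w.length = n)
    (S : Finset (List α)) (u : List α) : (XS L S u).Finite :=
  (List.finite_length_le α n).subset fun _ ht => XS_length_le hL ht

lemma XS_eq_self {L : Set (List α)} {S : Finset (List α)} {u t : List α}
    (h : ¬ ∃ s ∈ S, u <+: s) (ht : t ∈ XS L S u) : t = u := by
  by_contra hne
  exact h (ht.2.2.2 u List.prefix_rfl ht.1 (fun he => hne he.symm))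

lemma XS_singleton {L : Set (List α)} {S : Finset (List α)} {u : List α}
    (h : ¬ ∃ s ∈ S, u <+: s) (hp : inPrefix L u) : XS L S u = {u} := by
  ext t
  constructor
  · intro ht; exact XS_eq_self h ht
  · rintro rfl
    refine ⟨List.prefix_rfl, hp, h, fun t' h1 h2 hne => absurd ?_ hne⟩
    exact h2.eq_of_length (le_antisymm h2.length_le h1.length_le)

lemma XS_empty {L : Set (List α)} {S : Finset (List α)} {u : List α}
    (h : ¬ ∃ s ∈ S, u <+: s) (hp : ¬ inPrefix L u) : XS L S u = ∅ := by
  ext t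
  simp only [Set.mem_empty_iff_false, iff_false]
  intro ht
  have := XS_eq_self h ht
  subst this
  exact hp ht.2.1

lemma XS_iUnion {L : Set (List α)} {S : Finset (List α)} {u : List α}
    (h : ∃ s ∈ S, u <+: s) : XS L S u = ⋃ a : α, XS L S (u ++ [a]) := by
  ext t
  simp only [Set.mem_iUnion]
  constructor
  · rintro ⟨h1, h2, h3, h4⟩
    have hne : t ≠ u := by rintro rfl; exact h3 h
    obtain ⟨w, rfl⟩ := h1
    have hw : w ≠ [] := by rintro rfl; simp at hne
    obtain ⟨a, w', rfl⟩ := List.exists_cons_of_ne_nil hw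
    refine ⟨a, ⟨w', by simp⟩, h2, h3, fun t' h1' h2' hne' => ?_⟩
    exact h4 t' ((List.prefix_append u [a]).trans h1') h2' hne'
  · rintro ⟨a, h1, h2, h3, h4⟩
    refine ⟨(List.prefix_append u [a]).trans h1, h2, h3, fun t' hu' ht' hne' => ?_⟩
    rcases List.prefix_or_prefix_of_prefix ht' h1 with hc | hc
    · have hlen1 : t'.length ≤ u.length + 1 := by
        have := hc.length_le; simpa using this
      by_cases heq : t'.length = u.length + 1
      · have ht'' : t' = u ++ [a] := hc.eq_of_length (by simp [heq])
        subst ht''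
        exact h4 _ List.prefix_rfl h1 hne'
      · have hul : u.length = t'.length := by
          have := hu'.length_le; omega
        have : u = t' := hu'.eq_of_length hul
        subst this
        exact h
    · exact h4 t' hc ht' hne'

lemma XS_pairwise_disjoint (L : Set (List α)) (S : Finset (List α)) (u : List α) :
    Pairwise (Function.onFun Disjoint fun a : α => XS L S (u ++ [a])) := by
  intro a b hab
  refine Set.disjoint_left.2 fun t hta htb => hab ?_
  have h1 : u ++ [a] <+: t := hta.1
  have h2 : u ++ [b] <+: t := htb.1
  rcases List.prefix_or_prefix_of_prefix h1 h2 with h | h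
  · have := h.eq_of_length (by simp)
    simpa using this
  · have := h.eq_of_length (by simp)
    simpa using this.symm

lemma stmt6_aux (n : ℕ) (P : List α → ℝ) (L : Set (List α))
    (hL : ∀ w ∈ L, w.length = n) (S : Finset (List α))
    (hmarg : ∀ v : List α, v.length ≤ n → 0 < marg n P v) :
    ∀ (k : ℕ) (u : List α), u.length ≤ n → n - u.length = k →
      ctilde n P L S u - efg n P L u =
        ∑ᶠ t ∈ XS L S u, (marg n P t / marg n P u) * (1 - efg n P L t) := by
  intro k
  induction k with
  | zero =>
    intro u hu hk
    have hlen : u.length = n := by omega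
    have hc : ctilde n P L S u = Set.indicator L (fun _ => (1 : ℝ)) u := by
      rw [ctilde, hk, ctildeAux]
    rw [hc, efg_of_length_eq n P L u hlen (hmarg u hu), sub_self]
    refine (finsum_mem_of_eqOn_zero fun t ht => ?_).symm
    have htu : u = t := ht.1.eq_of_length
      (le_antisymm ht.1.length_le (by rw [hlen]; exact XS_length_le hL ht))
    subst htu
    have huL : u ∈ L := by
      obtain ⟨v, hv⟩ := ht.2.1
      have := hL _ hv
      simp only [List.length_append, hlen] at this
      have : v = [] := by
        have := List.eq_nil_of_length_eq_zero (by omega : v.length = 0)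
        exact this
      rw [this, List.append_nil] at hv
      exact hv
    rw [efg_of_length_eq n P L u hlen (hmarg u hu), Set.indicator_of_mem huL]
    simp
  | succ k ih =>
    intro u hu hk
    have hlt : u.length < n := by omega
    have h1 : marg n P u ≠ 0 := (hmarg u hu).ne'
    by_cases hpre : ∃ s ∈ S, u <+: s
    · -- recursive case
      have hct : ctilde n P L S u = ∑ a : α, cond n P u a * ctilde n P L S (u ++ [a]) := by
        rw [ctilde, hk, ctildeAux, if_pos hpre]
        refine Finset.sum_congr rfl fun a _ => ?_
        have : n - (u ++ [a]).length = k := by simp; omega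
        rw [ctilde, this]
      have hlen' : ∀ a : α, (u ++ [a]).length ≤ n := by intro a; simp; omega
      have hk' : ∀ a : α, n - (u ++ [a]).length = k := by intro a; simp; omega
      have h2 : ∀ a : α, marg n P (u ++ [a]) ≠ 0 := fun a => (hmarg _ (hlen' a)).ne'
      calc ctilde n P L S u - efg n P L u
          = ∑ a : α, cond n P u a *
              (ctilde n P L S (u ++ [a]) - efg n P L (u ++ [a])) := by
            rw [hct, efg_succ n P L u hlt hmarg, ← Finset.sum_sub_distrib]
            exact Finset.sum_congr rfl fun a _ => (mul_sub _ _ _).symm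
        _ = ∑ a : α, ∑ᶠ t ∈ XS L S (u ++ [a]),
              (marg n P t / marg n P u) * (1 - efg n P L t) := by
            refine Finset.sum_congr rfl fun a _ => ?_
            rw [ih (u ++ [a]) (hlen' a) (hk' a)]
            rw [finsum_mem_eq_finite_toFinset_sum _ (XS_finite hL S (u ++ [a])),
              finsum_mem_eq_finite_toFinset_sum _ (XS_finite hL S (u ++ [a])),
              Finset.mul_sum]
            refine Finset.sum_congr rfl fun t _ => ?_
            have h2a : marg n P (u ++ [a]) ≠ 0 := h2 a
            unfold cond
            field_simp
        _ = ∑ᶠ a : α, ∑ᶠ t ∈ XS L S (u ++ [a]),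
              (marg n P t / marg n P u) * (1 - efg n P L t) := by
            rw [finsum_eq_sum_of_fintype]
        _ = ∑ᶠ t ∈ ⋃ a : α, XS L S (u ++ [a]),
              (marg n P t / marg n P u) * (1 - efg n P L t) := by
            rw [finsum_mem_iUnion (XS_pairwise_disjoint L S u)
              (fun a => XS_finite hL S (u ++ [a]))]
        _ = ∑ᶠ t ∈ XS L S u, (marg n P t / marg n P u) * (1 - efg n P L t) := by
            rw [XS_iUnion hpre]
    · -- stopped case
      have hct : ctilde n P L S u
          = Set.indicator {t | inPrefix L t} (fun _ => (1 : ℝ)) u := by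
        rw [ctilde, hk, ctildeAux, if_neg hpre]
      by_cases hp : inPrefix L u
      · rw [hct, Set.indicator_of_mem (show u ∈ {t | inPrefix L t} from hp),
          XS_singleton hpre hp, finsum_mem_singleton, div_self h1, one_mul]
      · rw [hct, Set.indicator_of_notMem (show u ∉ {t | inPrefix L t} from hp),
          XS_empty hpre hp, finsum_mem_empty, efg_of_not_inPrefix n P L u hp, sub_zero]

end Aux

/-- the gap between the ASAp overapproximation and the true expected future
grammaticality equals the probability mass of the unexplored extensions, weighted by their
non-membership: `c̃_S(u) − c(u) = Σ_{t ∈ X_S(u)} P(t | u)·(1 − c(t))`. -/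
theorem stmt6 {α : Type*} [Fintype α] (n : ℕ) (P : List α → ℝ) (L : Set (List α))
    (hP : ∀ w, 0 ≤ P w) (hL : ∀ w ∈ L, w.length = n)
    (S : Finset (List α)) (hS : ↑S ⊆ L)
    (hmarg : ∀ v : List α, v.length ≤ n → 0 < marg n P v)
    (u : List α) (hu : u.length ≤ n) :
    ctilde n P L S u - efg n P L u =
      ∑ᶠ t ∈ XS L S u, (marg n P t / marg n P u) * (1 - efg n P L t) :=
  stmt6_aux n P L hL S hmarg (n - u.length) u hu rfl

end GAD
end

section
/- The GCD distribution stochastically over-weights 'trap' prefixes: in the setting where P is a product measure and L is such that a prefix u ∈ L_prefix has exactly one completion in L, the GCD probability of producing that unique completion given prefix u equals 1, while its grammar-aligned conditional probability Q(completion | u) also equals 1; however the probability Q̃_GCD(u) of reaching the prefix u satisfies Q̃_GCD(u)/Q(u) = c(empty)/c'(u) where c'(u) denotes the product over j ≤ |u| of the GCD normalizers; in the concrete binary example (uniform P on {0,1}^5, L = {00000} ∪ 1·{0,1}^4, u = '0'), this ratio equals 8.5, i.e., GCD reaches the trap prefix 8.5 times more often than the aligned distribution does. -/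
open scoped BigOperators
open Finset Filter

namespace GAD

/-- The GCD sampling distribution: conditionals reweighted by the prefix-language indicator. -/
noncomputable def QGCD {α : Type*} [Fintype α] (n : ℕ) (P : List α → ℝ) (L : Set (List α))
    (w : Fin n → α) : ℝ :=
  ∏ i : Fin n,
    cond n P ((List.ofFn w).take i) (w i) *
        Set.indicator {t | inPrefix L t} (fun _ => (1 : ℝ)) ((List.ofFn w).take i ++ [w i]) /
      ∑ a : α, cond n P ((List.ofFn w).take i) a *
        Set.indicator {t | inPrefix L t} (fun _ => (1 : ℝ)) ((List.ofFn w).take i ++ [a])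

/-- Uniform (i.i.d. Bernoulli(1/2)) distribution on binary strings of length 5. -/
noncomputable def P10 : List Bool → ℝ := fun w => if w.length = 5 then (1 : ℝ) / 32 else 0

/-- The language `{00000} ∪ 1·{0,1}⁴` (false = 0, true = 1). -/
def L10 : Set (List Bool) :=
  {w | w = [false, false, false, false, false] ∨ (w.length = 5 ∧ w.head? = some true)}


lemma sum_split (k : ℕ) (f : (Fin (k+1) → Bool) → ℝ) :
    ∑ v, f v = (∑ t : Fin k → Bool, f (Fin.cons true t)) + ∑ t : Fin k → Bool, f (Fin.cons false t) := by
  rw [← (Fin.consEquiv (fun _ : Fin (k+1) => Bool)).sum_comp f, Fintype.sum_prod_type,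
    Fintype.sum_bool]
  rfl

lemma marg_eq (u : List Bool) (h : u.length ≤ 5) :
    marg 5 P10 u = 2 ^ (5 - u.length) / 32 := by
  unfold marg P10
  have hlen : ∀ v : Fin (5 - u.length) → Bool, (u ++ List.ofFn v).length = 5 := by
    intro v; simp [List.length_append]; omega
  rw [Finset.sum_congr rfl (fun v _ => by rw [hlen v, if_pos rfl])]
  rw [Finset.sum_const, Finset.card_univ]
  simp [Fintype.card_fun]
  ring

lemma cond_eq (u : List Bool) (h : u.length < 5) (a : Bool) :
    cond 5 P10 u a = 1 / 2 := by
  unfold cond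
  rw [marg_eq u h.le, marg_eq (u ++ [a]) (by simp; omega)]
  have h2 : 5 - u.length = (5 - (u ++ [a]).length) + 1 := by simp; omega
  rw [h2, pow_succ]
  have : (2 : ℝ) ^ (5 - (u ++ [a]).length) ≠ 0 := by positivity
  field_simp

lemma ip_zeros (k : ℕ) (h : k ≤ 5) : inPrefix L10 (List.replicate k false) := by
  refine ⟨List.replicate (5 - k) false, Or.inl ?_⟩
  rw [← List.replicate_add]
  have : k + (5 - k) = 5 := by omega
  rw [this]
  rfl

lemma ip_true : inPrefix L10 [true] := by
  exact ⟨[false, false, false, false], Or.inr ⟨rfl, rfl⟩⟩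

lemma not_ip (u : List Bool) (h0 : u.head? = some false) (ht : true ∈ u) :
    ¬ inPrefix L10 u := by
  rintro ⟨v, hv | ⟨-, hh⟩⟩
  · have : true ∈ u ++ v := List.mem_append_left v ht
    rw [hv] at this
    simp at this
  · cases u with
    | nil => simp at h0
    | cons b l =>
      simp at h0
      simp [h0] at hh

-- compute QGCD at all-false
lemma qgcd_allfalse : QGCD 5 P10 L10 (fun _ => false) = 1 / 2 := by
  unfold QGCD
  rw [Fin.prod_univ_five]
  have hofn : List.ofFn (fun _ : Fin 5 => false) = List.replicate 5 false := List.ofFn_const 5 false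
  have htake : ∀ k : ℕ, k ≤ 5 → (List.ofFn (fun _ : Fin 5 => false)).take k = List.replicate k false := by
    intro k hk
    rw [hofn, List.take_replicate]
    congr 1
    omega
  have hrepapp : ∀ k : ℕ, List.replicate k false ++ [false] = List.replicate (k+1) false := by
    intro k
    rw [← List.replicate_succ']
  have ind1 : ∀ k : ℕ, k ≤ 4 → Set.indicator {t | inPrefix L10 t} (fun _ => (1:ℝ))
      (List.replicate k false ++ [false]) = 1 := by
    intro k hk
    rw [hrepapp]
    exact Set.indicator_of_mem
      (show List.replicate (k+1) false ∈ {t | inPrefix L10 t} from ip_zeros (k+1) (by omega)) _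
  have ind0 : ∀ k : ℕ, 1 ≤ k → Set.indicator {t | inPrefix L10 t} (fun _ => (1:ℝ))
      (List.replicate k false ++ [true]) = 0 := by
    intro k hk
    apply Set.indicator_of_notMem
    refine not_ip _ ?_ (by simp)
    cases k with
    | zero => omega
    | succ m => simp [List.replicate_succ]
  have indT : Set.indicator {t | inPrefix L10 t} (fun _ => (1:ℝ)) ((List.replicate 0 false) ++ [true]) = 1 := by
    have : (List.replicate 0 false) ++ [true] = [true] := rfl
    rw [this]
    exact Set.indicator_of_mem (show ([true] : List Bool) ∈ {t | inPrefix L10 t} from ip_true) _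
  simp only [show ((0 : Fin 5) : ℕ) = 0 from rfl, show ((1 : Fin 5) : ℕ) = 1 from rfl,
    show ((2 : Fin 5) : ℕ) = 2 from rfl, show ((3 : Fin 5) : ℕ) = 3 from rfl,
    show ((4 : Fin 5) : ℕ) = 4 from rfl, Fintype.sum_bool]
  rw [htake 0 (by norm_num), htake 1 (by norm_num), htake 2 (by norm_num),
    htake 3 (by norm_num), htake 4 (by norm_num)]
  rw [ind1 0 (by norm_num), ind1 1 (by norm_num), ind1 2 (by norm_num), ind1 3 (by norm_num),
    ind1 4 (by norm_num), indT, ind0 1 (by norm_num), ind0 2 (by norm_num), ind0 3 (by norm_num),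
    ind0 4 (by norm_num)]
  have hc : ∀ k : ℕ, k ≤ 4 → ∀ a : Bool, cond 5 P10 (List.replicate k false) a = 1 / 2 := by
    intro k hk a
    exact cond_eq _ (by simp; omega) a
  simp only [hc 0 (by norm_num), hc 1 (by norm_num), hc 2 (by norm_num), hc 3 (by norm_num),
    hc 4 (by norm_num)]
  norm_num

lemma qgcd_zero (w : Fin 5 → Bool) (h0 : w 0 = false) (i : Fin 5) (hi : w i = true) :
    QGCD 5 P10 L10 w = 0 := by
  unfold QGCD
  refine Finset.prod_eq_zero (Finset.mem_univ i) ?_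
  have hind : Set.indicator {t | inPrefix L10 t} (fun _ => (1:ℝ))
      ((List.ofFn w).take i ++ [w i]) = 0 := by
    refine Set.indicator_of_notMem ?_ _
    have hT : (List.ofFn w).take (i : ℕ) ++ [w i] = (List.ofFn w).take ((i : ℕ) + 1) := by
      have hsome : (List.ofFn w)[(i : ℕ)]? = some (w i) := by
        rw [List.getElem?_eq_getElem (by simp [i.isLt])]
        simp only [List.getElem_ofFn, Fin.eta]
      rw [List.take_succ, hsome]
      rfl
    rw [hT]
    refine not_ip _ ?_ ?_
    · rw [List.ofFn_succ, List.take_succ_cons]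
      simp [h0]
    · have hlen : (i : ℕ) < ((List.ofFn w).take ((i : ℕ) + 1)).length := by
        simp [i.isLt]
        omega
      have : ((List.ofFn w).take ((i:ℕ)+1))[(i:ℕ)] = true := by
        rw [List.getElem_take, List.getElem_ofFn]
        simpa using hi
      rw [← this]
      exact List.getElem_mem hlen
  rw [hind, mul_zero, zero_div]

lemma sum_qgcd : (∑ w : Fin 5 → Bool, if w 0 = false then QGCD 5 P10 L10 w else 0) = 1 / 2 := by
  have key : ∀ w : Fin 5 → Bool, (if w 0 = false then QGCD 5 P10 L10 w else 0)
      = if w = (fun _ => false) then (1:ℝ)/2 else 0 := by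
    intro w
    by_cases hw : w = fun _ => false
    · subst hw; simp [qgcd_allfalse]
    · rw [if_neg hw]
      by_cases h0 : w 0 = false
      · rw [if_pos h0]
        obtain ⟨i, hi⟩ : ∃ i, w i = true := by
          by_contra hc
          push_neg at hc
          exact hw (funext fun i => by simpa using hc i)
        exact qgcd_zero w h0 i hi
      · rw [if_neg h0]
  rw [Finset.sum_congr rfl (fun w _ => key w), Finset.sum_ite_eq' Finset.univ]
  simp

lemma PL_eq : PL 5 P10 L10 = 17 / 32 := by
  unfold PL margL
  simp only [List.nil_append, List.length_nil, Nat.sub_zero]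
  rw [sum_split 4 (fun v => L10.indicator P10 (List.ofFn v))]
  have h1 : ∀ t : Fin 4 → Bool, L10.indicator P10 (List.ofFn (Fin.cons true t)) = 1 / 32 := by
    intro t
    have hm : List.ofFn (Fin.cons true t) ∈ L10 := by
      refine Or.inr ⟨by simp, ?_⟩
      rw [List.ofFn_succ]
      simp
    rw [Set.indicator_of_mem hm, P10]
    simp
  have h2 : ∀ t : Fin 4 → Bool, L10.indicator P10 (List.ofFn (Fin.cons false t))
      = if t = (fun _ => false) then (1:ℝ)/32 else 0 := by
    intro t
    by_cases ht : t = fun _ => false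
    · subst ht
      rw [if_pos rfl]
      have hm : List.ofFn (Fin.cons false (fun _ : Fin 4 => false)) ∈ L10 := by
        refine Or.inl ?_
        rw [List.ofFn_succ]
        simp [List.ofFn_const, List.replicate]
      rw [Set.indicator_of_mem hm, P10]
      simp
    · rw [if_neg ht]
      refine Set.indicator_of_notMem ?_ _
      rintro (hv | ⟨-, hh⟩)
      · apply ht
        have h5 : ([false, false, false, false, false] : List Bool)
            = List.ofFn (fun _ : Fin 5 => false) := by decide
        have hc := List.ofFn_inj.mp (hv.trans h5)
        funext i
        have := congrFun hc i.succ
        simpa using this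
      · rw [List.ofFn_succ] at hh
        simp at hh
  rw [Finset.sum_congr rfl (fun t _ => h1 t), Finset.sum_congr rfl (fun t _ => h2 t)]
  rw [Finset.sum_const, Finset.card_univ, Finset.sum_ite_eq' Finset.univ]
  simp [Fintype.card_fun]
  norm_num

lemma margL_zero : margL 5 P10 L10 [false] = 1 / 32 := by
  unfold margL
  have key : ∀ v : Fin (5 - [false].length) → Bool, L10.indicator P10 ([false] ++ List.ofFn v)
      = if v = (fun _ => false) then (1:ℝ)/32 else 0 := by
    intro v
    by_cases hv : v = fun _ => false
    · subst hv
      rw [if_pos rfl]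
      have hm : [false] ++ List.ofFn (fun _ : Fin (5 - [false].length) => false) ∈ L10 := by
        refine Or.inl ?_
        simp [List.ofFn_const, List.replicate]
      rw [Set.indicator_of_mem hm, P10]
      simp
    · rw [if_neg hv]
      refine Set.indicator_of_notMem ?_ _
      rintro (h | ⟨-, hh⟩)
      · apply hv
        have h' := congrArg List.tail h
        simp only [List.cons_append, List.tail_cons] at h'
        have h4 : ([false, false, false, false] : List Bool)
            = List.ofFn (fun _ : Fin (5 - [false].length) => false) := by decide
        exact List.ofFn_inj.mp (h'.trans h4)
      · simp at hh
  rw [Finset.sum_congr rfl (fun v _ => key v), Finset.sum_ite_eq' Finset.univ]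
  simp

lemma ind_allfalse : L10.indicator P10 (List.ofFn (fun _ => false : Fin 5 → Bool)) = 1 / 32 := by
  have hm : List.ofFn (fun _ => false : Fin 5 → Bool) ∈ L10 := by
    refine Or.inl ?_
    simp [List.ofFn_const, List.replicate]
  rw [Set.indicator_of_mem hm, P10]
  simp


/-- GCD over-weights the trap prefix: in the uniform binary example with
`L = {00000} ∪ 1·{0,1}^4` and trap prefix `u = 0`, both GCD and the aligned distribution
produce the unique completion `00000` of `u` with conditional probability 1, but GCD reaches
`u` with probability `1/2` while the aligned distribution reaches it with probability `1/17`,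
a ratio of `8.5`. -/
theorem stmt17 :
    QGCD 5 P10 L10 (fun _ => false) /
        (∑ w : Fin 5 → Bool, if w 0 = false then QGCD 5 P10 L10 w else 0) = 1 ∧
    (L10.indicator P10 (List.ofFn (fun _ => false : Fin 5 → Bool)) / PL 5 P10 L10) /
        (margL 5 P10 L10 [false] / PL 5 P10 L10) = 1 ∧
    (∑ w : Fin 5 → Bool, if w 0 = false then QGCD 5 P10 L10 w else 0) = 1 / 2 ∧
    margL 5 P10 L10 [false] / PL 5 P10 L10 = 1 / 17 ∧
    (∑ w : Fin 5 → Bool, if w 0 = false then QGCD 5 P10 L10 w else 0) /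
        (margL 5 P10 L10 [false] / PL 5 P10 L10) = 17 / 2 := by
  rw [sum_qgcd, qgcd_allfalse, PL_eq, margL_zero, ind_allfalse]
  norm_num

end GAD
end
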